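/- Suppose K = G ⋈ H is an internal Zappa–Szép product of cancellative, conical monoids G and H that act on each other by injections. Then the left-divisibility relation ≼ and the right-divisibility relation ≽ on K are partial orders, and their restrictions to G × G and H × H coincide with the corresponding divisibility relations of G and H respectively. -/
import Mathlib


namespace ZSPaper

/-- Internal Zappa–Szép product: every element of `K` has a unique `GH`-decomposition
and a unique `HG`-decomposition. -/
structure ZS (K : Type*) [Monoid K] (G H : Submonoid K) : Prop where
  exGH : ∀ k : K, ∃! p : G × H, (p.1 : K) * (p.2 : K) = k
  exHG : ∀ k : K, ∃! p : H × G, (p.1 : K) * (p.2 : K) = k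

variable {K : Type*} [Monoid K] {G H : Submonoid K}

/-- `h ▷ g`, defined by `h * g = (h ▷ g) * (h ◁ g)`. -/
noncomputable def ZS.rtr (zs : ZS K G H) (h : H) (g : G) : G :=
  ((zs.exGH ((h : K) * (g : K))).choose).1

/-- `h ◁ g`, defined by `h * g = (h ▷ g) * (h ◁ g)`. -/
noncomputable def ZS.rtl (zs : ZS K G H) (h : H) (g : G) : H :=
  ((zs.exGH ((h : K) * (g : K))).choose).2

/-- `g ▶ h`, defined by `g * h = (g ▶ h) * (g ◀ h)`. -/
noncomputable def ZS.ltr (zs : ZS K G H) (g : G) (h : H) : H :=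
  ((zs.exHG ((g : K) * (h : K))).choose).1

/-- `g ◀ h`, defined by `g * h = (g ▶ h) * (g ◀ h)`. -/
noncomputable def ZS.ltl (zs : ZS K G H) (g : G) (h : H) : G :=
  ((zs.exHG ((g : K) * (h : K))).choose).2

/-- Right divisibility: `x` is a suffix of `y`. -/
def RDvd {M : Type*} [Monoid M] (x y : M) : Prop := ∃ u, y = u * x

/-- An atom of a monoid. -/
def MAtom {M : Type*} [Monoid M] (a : M) : Prop :=
  a ≠ 1 ∧ ∀ u v : M, a = u * v → u = 1 ∨ v = 1

/-- An atomic monoid: generated by its atoms, with bounded lengths of atomic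
decompositions. -/
def Atomic (M : Type*) [Monoid M] : Prop :=
  (∀ x : M, ∃ l : List M, (∀ a ∈ l, MAtom a) ∧ l.prod = x) ∧
  ∀ x : M, ∃ N : ℕ, ∀ l : List M, (∀ a ∈ l, MAtom a) → l.prod = x → l.length ≤ N

/-- `m` is the least common upper bound of the set `S` with respect to
left divisibility. -/
def IsDvdLUB {M : Type*} [Monoid M] (S : Set M) (m : M) : Prop :=
  (∀ s ∈ S, s ∣ m) ∧ ∀ n, (∀ s ∈ S, s ∣ n) → m ∣ n

/-- `m` is the least common upper bound of `x` and `y` with respect to left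
divisibility. -/
def IsDvdLCM {M : Type*} [Monoid M] (x y m : M) : Prop :=
  x ∣ m ∧ y ∣ m ∧ ∀ n, x ∣ n → y ∣ n → m ∣ n

/-- `d = Δ_x`, the least common upper bound of `{ y \ x : y ∈ M }`, where
`y * (y \ x) = y ∨ x`. -/
def IsDeltaOf {M : Type*} [Monoid M] (x d : M) : Prop :=
  IsDvdLUB {t : M | ∃ y, IsDvdLCM y x (y * t)} d

/-- A Garside structure on a monoid `M` with Garside element `Δ`. -/
structure GarsideStructure (M : Type*) [Monoid M] (Δ : M) : Prop where
  mul_left_cancel : ∀ a b c : M, a * b = a * c → b = c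
  mul_right_cancel : ∀ a b c : M, b * a = c * a → b = c
  atomic : Atomic M
  meet_left : ∀ x y : M, ∃ d, d ∣ x ∧ d ∣ y ∧ ∀ e, e ∣ x → e ∣ y → e ∣ d
  join_left : ∀ x y : M, ∃ m, x ∣ m ∧ y ∣ m ∧ ∀ n, x ∣ n → y ∣ n → m ∣ n
  meet_right : ∀ x y : M, ∃ d, RDvd d x ∧ RDvd d y ∧ ∀ e, RDvd e x → RDvd e y → RDvd e d
  join_right : ∀ x y : M, ∃ m, RDvd x m ∧ RDvd y m ∧ ∀ n, RDvd x n → RDvd y n → RDvd m n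
  balanced : ∀ x, x ∣ Δ ↔ RDvd x Δ
  div_finite : {x : M | x ∣ Δ}.Finite
  div_gen : Submonoid.closure {x : M | x ∣ Δ} = ⊤

end ZSPaper

open ZSPaper Function

section Aux

variable {K : Type*} [Monoid K] {G H : Submonoid K}

lemma ZSPaper.ZS.GH_unique (zs : ZS K G H) {g₁ g₂ : G} {h₁ h₂ : H}
    (e : (g₁ : K) * h₁ = (g₂ : K) * h₂) : g₁ = g₂ ∧ h₁ = h₂ := by
  obtain ⟨p, hp, hu⟩ := zs.exGH ((g₂ : K) * h₂)
  have e1 : ((g₁, h₁) : G × H) = p := hu _ e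
  have e2 : ((g₂, h₂) : G × H) = p := hu _ rfl
  have := e1.trans e2.symm
  exact ⟨congrArg Prod.fst this, congrArg Prod.snd this⟩

lemma ZSPaper.ZS.HG_unique (zs : ZS K G H) {g₁ g₂ : G} {h₁ h₂ : H}
    (e : (h₁ : K) * g₁ = (h₂ : K) * g₂) : h₁ = h₂ ∧ g₁ = g₂ := by
  obtain ⟨p, hp, hu⟩ := zs.exHG ((h₂ : K) * g₂)
  have e1 : ((h₁, g₁) : H × G) = p := hu _ e
  have e2 : ((h₂, g₂) : H × G) = p := hu _ rfl
  have := e1.trans e2.symm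
  exact ⟨congrArg Prod.fst this, congrArg Prod.snd this⟩

lemma ZSPaper.ZS.rtr_rtl_spec (zs : ZS K G H) (h : H) (g : G) :
    (zs.rtr h g : K) * (zs.rtl h g : K) = (h : K) * g :=
  (zs.exGH ((h : K) * g)).choose_spec.1

lemma ZSPaper.ZS.ltr_ltl_spec (zs : ZS K G H) (g : G) (h : H) :
    (zs.ltr g h : K) * (zs.ltl g h : K) = (g : K) * h :=
  (zs.exHG ((g : K) * h)).choose_spec.1

end Aux

theorem stmt13 {K : Type*} [Monoid K] {G H : Submonoid K} (zs : ZS K G H)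
    (hGl : ∀ a b c : G, a * b = a * c → b = c)
    (hGr : ∀ a b c : G, b * a = c * a → b = c)
    (hHl : ∀ a b c : H, a * b = a * c → b = c)
    (hHr : ∀ a b c : H, b * a = c * a → b = c)
    (hGcon : ∀ a b : G, a * b = 1 → a = 1 ∧ b = 1)
    (hHcon : ∀ a b : H, a * b = 1 → a = 1 ∧ b = 1)
    (hi₁ : ∀ h : H, Function.Injective (zs.rtr h))
    (hi₂ : ∀ h : H, Function.Injective (fun g : G => zs.ltl g h))
    (hi₃ : ∀ g : G, Function.Injective (fun h : H => zs.rtl h g))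
    (hi₄ : ∀ g : G, Function.Injective (zs.ltr g)) :
    IsPartialOrder K (· ∣ ·) ∧
    IsPartialOrder K (fun x y => RDvd x y) ∧
    (∀ g₁ g₂ : G, ((g₁ : K) ∣ (g₂ : K)) ↔ g₁ ∣ g₂) ∧
    (∀ g₁ g₂ : G, RDvd (g₁ : K) (g₂ : K) ↔ RDvd g₁ g₂) ∧
    (∀ h₁ h₂ : H, ((h₁ : K) ∣ (h₂ : K)) ↔ h₁ ∣ h₂) ∧
    (∀ h₁ h₂ : H, RDvd (h₁ : K) (h₂ : K) ↔ RDvd h₁ h₂) := by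
  -- conicality of K
  have Kcon : ∀ x y : K, x * y = 1 → x = 1 ∧ y = 1 := by
    intro x y hxy
    obtain ⟨⟨g, h⟩, (hx : (g : K) * h = x), _⟩ := zs.exGH x
    obtain ⟨⟨g', h'⟩, (hy : (g' : K) * h' = y), _⟩ := zs.exGH y
    have key : ((g * zs.rtr h g' : G) : K) * ((zs.rtl h g' * h' : H) : K) =
        ((1 : G) : K) * ((1 : H) : K) := by
      push_cast
      calc (g : K) * zs.rtr h g' * (zs.rtl h g' * h')
          = (g : K) * ((zs.rtr h g' : K) * zs.rtl h g') * h' := by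
            simp [mul_assoc]
        _ = (g : K) * ((h : K) * g') * h' := by rw [zs.rtr_rtl_spec]
        _ = 1 := by rw [← hxy, ← hx, ← hy]; simp [mul_assoc]
      simp
    obtain ⟨eg, eh⟩ := zs.GH_unique key
    obtain ⟨hg1, hrtr1⟩ := hGcon _ _ eg
    obtain ⟨hrtl1, hh'1⟩ := hHcon _ _ eh
    have hg'h : (h : K) * g' = 1 := by
      rw [← zs.rtr_rtl_spec, hrtr1, hrtl1]; simp
    have e2 : (h : K) * (g' : K) = ((1 : H) : K) * ((1 : G) : K) := by
      simpa using hg'h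
    obtain ⟨hh1, hg'1⟩ := zs.HG_unique e2
    constructor
    · rw [← hx, hg1, hh1]; simp
    · rw [← hy, hg'1, hh'1]; simp
  -- left cancellation in K
  have Glc : ∀ (g : G) (x y : K), (g : K) * x = (g : K) * y → x = y := by
    intro g x y e
    obtain ⟨⟨g₁, h₁⟩, (hx : (g₁ : K) * h₁ = x), _⟩ := zs.exGH x
    obtain ⟨⟨g₂, h₂⟩, (hy : (g₂ : K) * h₂ = y), _⟩ := zs.exGH y
    have e' : ((g * g₁ : G) : K) * (h₁ : K) = ((g * g₂ : G) : K) * (h₂ : K) := by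
      push_cast; rw [mul_assoc, mul_assoc, hx, hy]; exact e
    obtain ⟨eg, eh⟩ := zs.GH_unique e'
    rw [← hx, ← hy, hGl _ _ _ eg, eh]
  have Hlc : ∀ (h : H) (x y : K), (h : K) * x = (h : K) * y → x = y := by
    intro h x y e
    obtain ⟨⟨g₁, h₁⟩, (hx : (g₁ : K) * h₁ = x), _⟩ := zs.exGH x
    obtain ⟨⟨g₂, h₂⟩, (hy : (g₂ : K) * h₂ = y), _⟩ := zs.exGH y
    have e' : ((zs.rtr h g₁ : G) : K) * ((zs.rtl h g₁ * h₁ : H) : K) =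
        ((zs.rtr h g₂ : G) : K) * ((zs.rtl h g₂ * h₂ : H) : K) := by
      push_cast
      rw [← mul_assoc, ← mul_assoc, zs.rtr_rtl_spec, zs.rtr_rtl_spec,
        mul_assoc, mul_assoc, hx, hy]
      exact e
    obtain ⟨eg, eh⟩ := zs.GH_unique e'
    have eg' : g₁ = g₂ := hi₁ h eg
    rw [eg'] at eh
    have eh' : h₁ = h₂ := hHl _ _ _ eh
    rw [← hx, ← hy, eg', eh']
  have Klc : ∀ a x y : K, a * x = a * y → x = y := by
    intro a x y e
    obtain ⟨⟨g, h⟩, (ha : (g : K) * h = a), _⟩ := zs.exGH a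
    rw [← ha, mul_assoc, mul_assoc] at e
    exact Hlc h _ _ (Glc g _ _ e)
  -- right cancellation in K
  have Grc : ∀ (g : G) (x y : K), x * (g : K) = y * (g : K) → x = y := by
    intro g x y e
    obtain ⟨⟨h₁, g₁⟩, (hx : (h₁ : K) * g₁ = x), _⟩ := zs.exHG x
    obtain ⟨⟨h₂, g₂⟩, (hy : (h₂ : K) * g₂ = y), _⟩ := zs.exHG y
    have e' : (h₁ : K) * ((g₁ * g : G) : K) = (h₂ : K) * ((g₂ * g : G) : K) := by
      push_cast; rw [← mul_assoc, ← mul_assoc, hx, hy]; exact e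
    obtain ⟨eh, eg⟩ := zs.HG_unique e'
    rw [← hx, ← hy, hGr _ _ _ eg, eh]
  have Hrc : ∀ (h : H) (x y : K), x * (h : K) = y * (h : K) → x = y := by
    intro h x y e
    obtain ⟨⟨h₁, g₁⟩, (hx : (h₁ : K) * g₁ = x), _⟩ := zs.exHG x
    obtain ⟨⟨h₂, g₂⟩, (hy : (h₂ : K) * g₂ = y), _⟩ := zs.exHG y
    have e' : ((h₁ * zs.ltr g₁ h : H) : K) * ((zs.ltl g₁ h : G) : K) =
        ((h₂ * zs.ltr g₂ h : H) : K) * ((zs.ltl g₂ h : G) : K) := by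
      push_cast
      rw [mul_assoc, mul_assoc, zs.ltr_ltl_spec, zs.ltr_ltl_spec,
        ← mul_assoc, ← mul_assoc, hx, hy]
      exact e
    obtain ⟨eh, eg⟩ := zs.HG_unique e'
    have eg' : g₁ = g₂ := hi₂ h eg
    rw [eg'] at eh
    have eh' : h₁ = h₂ := hHr _ _ _ eh
    rw [← hx, ← hy, eg', eh']
  have Krc : ∀ a x y : K, x * a = y * a → x = y := by
    intro a x y e
    obtain ⟨⟨h, g⟩, (ha : (h : K) * g = a), _⟩ := zs.exHG a
    rw [← ha, ← mul_assoc, ← mul_assoc] at e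
    exact Hrc h _ _ (Grc g _ _ e)
  refine ⟨?_, ?_, ?_, ?_, ?_, ?_⟩
  · exact { refl := dvd_refl
            trans := fun a b c => dvd_trans
            antisymm := by
              rintro a b ⟨u, rfl⟩ ⟨v, hv⟩
              have : a * (u * v) = a * 1 := by rw [mul_one, ← mul_assoc, ← hv]
              have huv := Klc _ _ _ this
              rw [(Kcon _ _ huv).1, mul_one] }
  · exact { refl := fun x => ⟨1, (one_mul x).symm⟩
            trans := by rintro a b c ⟨u, rfl⟩ ⟨v, rfl⟩; exact ⟨v * u, (mul_assoc v u a).symm⟩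
            antisymm := by
              rintro a b ⟨u, rfl⟩ ⟨v, hv⟩
              have : (v * u) * a = 1 * a := by rw [one_mul, mul_assoc, ← hv]
              have huv := Krc _ _ _ this
              rw [(Kcon _ _ huv).2, one_mul] }
  · intro g₁ g₂
    constructor
    · rintro ⟨k, hk⟩
      obtain ⟨⟨g, h⟩, (hkd : (g : K) * h = k), _⟩ := zs.exGH k
      have e : ((g₁ * g : G) : K) * (h : K) = ((g₂ : K)) * ((1 : H) : K) := by
        push_cast; rw [mul_assoc, hkd, mul_one]; exact hk.symm
      obtain ⟨eg, -⟩ := zs.GH_unique e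
      exact ⟨g, eg.symm⟩
    · rintro ⟨c, rfl⟩; exact ⟨c, by push_cast; ring_nf⟩
  · intro g₁ g₂
    constructor
    · rintro ⟨k, hk⟩
      obtain ⟨⟨h, g⟩, (hkd : (h : K) * g = k), _⟩ := zs.exHG k
      have e : (h : K) * ((g * g₁ : G) : K) = ((1 : H) : K) * ((g₂ : K)) := by
        push_cast; rw [← mul_assoc, hkd, one_mul]; exact hk.symm
      obtain ⟨-, eg⟩ := zs.HG_unique e
      exact ⟨g, eg.symm⟩
    · rintro ⟨c, rfl⟩; exact ⟨c, by push_cast; ring_nf⟩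
  · intro h₁ h₂
    constructor
    · rintro ⟨k, hk⟩
      obtain ⟨⟨h, g⟩, (hkd : (h : K) * g = k), _⟩ := zs.exHG k
      have e : ((h₁ * h : H) : K) * (g : K) = ((h₂ : K)) * ((1 : G) : K) := by
        push_cast; rw [mul_assoc, hkd, mul_one]; exact hk.symm
      obtain ⟨eh, -⟩ := zs.HG_unique e
      exact ⟨h, eh.symm⟩
    · rintro ⟨c, rfl⟩; exact ⟨c, by push_cast; ring_nf⟩
  · intro h₁ h₂
    constructor
    · rintro ⟨k, hk⟩
      obtain ⟨⟨g, h⟩, (hkd : (g : K) * h = k), _⟩ := zs.exGH k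
      have e : (g : K) * ((h * h₁ : H) : K) = ((1 : G) : K) * ((h₂ : K)) := by
        push_cast; rw [← mul_assoc, hkd, one_mul]; exact hk.symm
      obtain ⟨-, eh⟩ := zs.GH_unique e
      exact ⟨h, eh.symm⟩
    · rintro ⟨c, rfl⟩; exact ⟨c, by push_cast; ring_nf⟩
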